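/- arXiv:1507.08041 — 2 statements merged into one kernel-verified Lean document; each statement's English description precedes it below -/
import Mathlib

section
/- For any integer t ≥ 0 and real s ≥ 1, define f_k(x | s, t) = k (kx)^{−kx − 1/2} (ks)^{−kx/2} e^{−kx/2} (kx + t)^{(3kx)/2 + (3t)/2 + 1/2} (1 − (kx+t)/(ks))^{(1/2)(k(x−s)+t+2)} for x ∈ (0,1]. Then lim_{k→∞} f_k(x | s, t) = 0 for every x ∈ (0,1]. -/
open Filter

lemma fMix_aux_tendsto (C1 C2 g' : ℝ) (hg : g' < 0) :
    Tendsto (fun k : ℕ => Real.exp (C1 + C2 * Real.log k + g' * k)) atTop (nhds 0) := by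
  have h1 : Tendsto (fun y : ℝ => C1 + C2 * Real.log y + g' * y) atTop atBot := by
    have hε : (0:ℝ) < -g' / 2 := by linarith
    have h2 : ∀ᶠ y : ℝ in atTop, C2 * Real.log y ≤ (-g' / 2) * y := by
      have hlo : (fun y : ℝ => C2 * Real.log y) =o[atTop] (id : ℝ → ℝ) :=
        Real.isLittleO_log_id_atTop.const_mul_left C2
      filter_upwards [(Asymptotics.isLittleO_iff.mp hlo hε), eventually_ge_atTop (0:ℝ)]
        with y h hy
      calc C2 * Real.log y ≤ |C2 * Real.log y| := le_abs_self _
        _ = |C2| * |Real.log y| := abs_mul _ _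
        _ ≤ (-g' / 2) * |y| := by simpa [Real.norm_eq_abs, abs_mul] using h
        _ = (-g' / 2) * y := by rw [abs_of_nonneg hy]
    have h3 : Tendsto (fun y : ℝ => C1 + (g' / 2) * y) atTop atBot := by
      apply tendsto_atBot_add_const_left
      exact (tendsto_const_mul_atBot_of_neg (by linarith : g'/2 < 0)).mpr tendsto_id
    apply tendsto_atBot_mono' atTop _ h3
    filter_upwards [h2] with y hy
    nlinarith [hy]
  exact Real.tendsto_exp_atBot.comp (h1.comp tendsto_natCast_atTop_atTop)

lemma fMix_P_le (t : ℕ) (s x : ℝ) (hs : 0 < s) (hx0 : 0 < x) (k : ℕ) (hk : 1 ≤ (k:ℝ)) :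
    (k : ℝ) * ((k : ℝ) * x) ^ (-(k : ℝ) * x - 1 / 2) * ((k : ℝ) * s) ^ (-((k : ℝ) * x) / 2)
      * Real.exp (-((k : ℝ) * x) / 2)
      * ((k : ℝ) * x + (t : ℝ)) ^ ((3 * ((k : ℝ) * x)) / 2 + (3 * (t : ℝ)) / 2 + 1 / 2)
    ≤ Real.exp ((-(1/2) * Real.log x + 3*(t:ℝ)/2 + (3*(t:ℝ)/2 + 1/2) * Real.log (x + t))
        + (1 + 3*(t:ℝ)/2) * Real.log k
        + ((x/2) * (Real.log x - Real.log s) - x/2) * k) := by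
  have hk0 : (0:ℝ) < k := by linarith
  have hs0 : (0:ℝ) < s := hs
  have hK : (0:ℝ) < (k:ℝ) * x := by positivity
  have hKs : (0:ℝ) < (k:ℝ) * s := by positivity
  have hKt : (0:ℝ) < (k:ℝ) * x + t := by positivity
  set K : ℝ := (k:ℝ) * x with hKdef
  have hP : (0:ℝ) < (k : ℝ) * ((k : ℝ) * x) ^ (-(k : ℝ) * x - 1 / 2) * ((k : ℝ) * s) ^ (-((k : ℝ) * x) / 2)
      * Real.exp (-((k : ℝ) * x) / 2)
      * ((k : ℝ) * x + (t : ℝ)) ^ ((3 * ((k : ℝ) * x)) / 2 + (3 * (t : ℝ)) / 2 + 1 / 2) := by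
    positivity
  rw [← Real.exp_log hP, Real.exp_le_exp]
  have hlogP : Real.log ((k : ℝ) * ((k : ℝ) * x) ^ (-(k : ℝ) * x - 1 / 2) * ((k : ℝ) * s) ^ (-((k : ℝ) * x) / 2)
      * Real.exp (-((k : ℝ) * x) / 2)
      * ((k : ℝ) * x + (t : ℝ)) ^ ((3 * ((k : ℝ) * x)) / 2 + (3 * (t : ℝ)) / 2 + 1 / 2))
      = Real.log k + (-K - 1/2) * (Real.log k + Real.log x)
        + (-K/2) * (Real.log k + Real.log s) + (-K/2)
        + (3*K/2 + 3*(t:ℝ)/2 + 1/2) * Real.log (K + t) := by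
    rw [Real.log_mul (by positivity) (by positivity), Real.log_mul (by positivity) (by positivity),
      Real.log_mul (by positivity) (by positivity), Real.log_mul (by positivity) (by positivity),
      Real.log_rpow hK, Real.log_rpow hKs, Real.log_rpow hKt, Real.log_exp,
      Real.log_mul (ne_of_gt hk0) (ne_of_gt hx0), Real.log_mul (ne_of_gt hk0) (ne_of_gt hs0)]
    ring
  rw [hlogP]
  have e1 : Real.log (K + t) ≤ Real.log k + Real.log x + (t:ℝ) / K := by
    have h := Real.log_le_sub_one_of_pos (show (0:ℝ) < (K + t)/K by positivity)
    have hKne : K ≠ 0 := ne_of_gt hK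
    rw [Real.log_div (ne_of_gt hKt) hKne] at h
    have : (K + t)/K - 1 = (t:ℝ)/K := by field_simp; ring
    rw [this] at h
    have hlogK : Real.log K = Real.log k + Real.log x :=
      Real.log_mul (ne_of_gt hk0) (ne_of_gt hx0)
    linarith
  have e1' : (3*K/2) * Real.log (K + t) ≤ (3*K/2) * (Real.log k + Real.log x) + 3*(t:ℝ)/2 := by
    have h := mul_le_mul_of_nonneg_left e1 (show (0:ℝ) ≤ 3*K/2 by positivity)
    have hc : (3*K/2) * ((t:ℝ)/K) = 3*(t:ℝ)/2 := by
      field_simp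
    nlinarith [h, hc]
  have e2 : Real.log (K + t) ≤ Real.log k + Real.log (x + t) := by
    have hle : K + (t:ℝ) ≤ (k:ℝ) * (x + t) := by
      have : (t:ℝ) ≤ (k:ℝ) * t := by nlinarith [Nat.cast_nonneg (α := ℝ) t]
      rw [hKdef]; nlinarith
    calc Real.log (K + t) ≤ Real.log ((k:ℝ) * (x + t)) :=
          Real.log_le_log (by positivity) hle
      _ = Real.log k + Real.log (x + t) :=
          Real.log_mul (ne_of_gt hk0) (by positivity)
  have e2' : (3*(t:ℝ)/2 + 1/2) * Real.log (K + t)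
      ≤ (3*(t:ℝ)/2 + 1/2) * (Real.log k + Real.log (x + t)) :=
    mul_le_mul_of_nonneg_left e2 (by positivity)
  have key : Real.log k + (-K - 1/2) * (Real.log k + Real.log x)
        + (-K/2) * (Real.log k + Real.log s) + (-K/2)
        + ((3*K/2) * (Real.log k + Real.log x) + 3*(t:ℝ)/2)
        + (3*(t:ℝ)/2 + 1/2) * (Real.log k + Real.log (x + t))
      = (-(1/2) * Real.log x + 3*(t:ℝ)/2 + (3*(t:ℝ)/2 + 1/2) * Real.log (x + t))
        + (1 + 3*(t:ℝ)/2) * Real.log k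
        + ((x/2) * (Real.log x - Real.log s) - x/2) * k := by
    rw [hKdef]; ring
  have split : (3*K/2 + 3*(t:ℝ)/2 + 1/2) * Real.log (K + t)
      = (3*K/2) * Real.log (K + t) + (3*(t:ℝ)/2 + 1/2) * Real.log (K + t) := by ring
  rw [split]
  linarith [e1', e2']

/-- The function f_k(x | s, t) arising in the consistency proof for the mixture of
g-priors with the hierarchical uniform model prior. -/
noncomputable def fMix (k : ℕ) (x s : ℝ) (t : ℕ) : ℝ :=
  (k : ℝ) * ((k : ℝ) * x) ^ (-(k : ℝ) * x - 1 / 2) * ((k : ℝ) * s) ^ (-((k : ℝ) * x) / 2)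
    * Real.exp (-((k : ℝ) * x) / 2)
    * ((k : ℝ) * x + (t : ℝ)) ^ ((3 * ((k : ℝ) * x)) / 2 + (3 * (t : ℝ)) / 2 + 1 / 2)
    * (1 - ((k : ℝ) * x + (t : ℝ)) / ((k : ℝ) * s))
        ^ ((1 / 2 : ℝ) * ((k : ℝ) * (x - s) + (t : ℝ) + 2))

set_option maxHeartbeats 2000000 in
theorem fMix_tendsto_zero (t : ℕ) (s : ℝ) (hs : 1 ≤ s) (x : ℝ)
    (hx0 : 0 < x) (hx1 : x ≤ 1) :
    Tendsto (fun k : ℕ => fMix k x s t) atTop (nhds 0) := by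
  have hs0 : (0:ℝ) < s := by linarith
  rcases lt_or_eq_of_le (hx1.trans hs) with hxs | hxs
  · -- case x < s
    set b : ℝ := 1 - x / s with hbdef
    have hb0 : 0 < b := by
      rw [hbdef]
      have : x / s < 1 := (div_lt_one hs0).mpr hxs
      linarith
    have hb1 : b < 1 := by
      rw [hbdef]
      have : 0 < x / s := by positivity
      linarith
    set A1 : ℝ := -(1/2) * Real.log x + 3*(t:ℝ)/2 + (3*(t:ℝ)/2 + 1/2) * Real.log (x + t) with hA1
    set A3 : ℝ := (s - x) * t / (s * b) with hA3
    set G : ℝ := (x/2) * (Real.log x - Real.log s) - x/2 with hG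
    set H : ℝ := ((x - s)/2) * Real.log b with hH
    clear_value A1 A3 G H
    have hg : G + H < 0 := by
      have t1 : (x/2) * (Real.log x - Real.log s) < 0 := by
        have : Real.log x < Real.log s := Real.log_lt_log hx0 hxs
        nlinarith
      have t2 : H ≤ x/2 := by
        have hsx : 0 < s - x := by linarith
        have hL : Real.log (s / (s - x)) ≤ x / (s - x) := by
          have h := Real.log_le_sub_one_of_pos (show (0:ℝ) < s / (s - x) by positivity)
          have h' : s / (s - x) - 1 = x / (s - x) := by field_simp; ring
          linarith [h, h'.le]
        have hbinv : Real.log b = - Real.log (s / (s - x)) := by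
          rw [hbdef, show (1:ℝ) - x / s = (s/(s-x))⁻¹ by field_simp, Real.log_inv]
        rw [hH, hbinv]
        have hx2 : ((s - x)/2) * (x / (s - x)) = x/2 := by field_simp
        nlinarith [mul_le_mul_of_nonneg_left hL (show (0:ℝ) ≤ (s - x)/2 by linarith)]
      rw [hG]
      linarith
    refine squeeze_zero_norm' ?_ (fMix_aux_tendsto (A1 + A3) (1 + 3*(t:ℝ)/2) (G + H) hg)
    have ev1 := tendsto_natCast_atTop_atTop.eventually_ge_atTop (1:ℝ)
    have ev2 := tendsto_natCast_atTop_atTop.eventually_ge_atTop (2*(t:ℝ)/(s*b))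
    filter_upwards [ev1, ev2] with k hk1 hk2
    have hk0 : (0:ℝ) < k := by linarith
    have hks : (0:ℝ) < (k:ℝ) * s := by positivity
    simp only [fMix]
    set bk : ℝ := 1 - ((k:ℝ) * x + (t:ℝ)) / ((k:ℝ) * s) with hbk
    clear_value bk
    have hbkeq : bk = b - (t:ℝ) / ((k:ℝ) * s) := by
      rw [hbk, hbdef]; field_simp; ring
    have htks : (t:ℝ) / ((k:ℝ) * s) ≤ b / 2 := by
      rw [div_le_div_iff₀ hks (by norm_num : (0:ℝ) < 2)]
      have h2t : 2*(t:ℝ) ≤ (k:ℝ) * (s*b) := by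
        have := (div_le_iff₀ (mul_pos hs0 hb0)).mp hk2
        linarith
      nlinarith
    have hbk_lb : b / 2 ≤ bk := by rw [hbkeq]; linarith
    have hbk_pos : 0 < bk := lt_of_lt_of_le (half_pos hb0) hbk_lb
    have hbk_ub : bk ≤ b := by
      rw [hbkeq]
      have : 0 ≤ (t:ℝ) / ((k:ℝ) * s) := by positivity
      linarith
    have hbk1 : bk ≤ 1 := le_of_lt (lt_of_le_of_lt hbk_ub hb1)
    have hlogbk_np : Real.log bk ≤ 0 := Real.log_nonpos hbk_pos.le hbk1
    have lb : Real.log b - 2*(t:ℝ)/((k:ℝ)*s*b) ≤ Real.log bk := by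
      have h := Real.log_le_sub_one_of_pos (div_pos hb0 hbk_pos)
      rw [Real.log_div (ne_of_gt hb0) (ne_of_gt hbk_pos)] at h
      have h2 : b / bk - 1 = (b - bk) / bk := by field_simp
      have h3 : b - bk = (t:ℝ) / ((k:ℝ) * s) := by rw [hbkeq]; ring
      have h4 : ((t:ℝ) / ((k:ℝ) * s)) / bk ≤ ((t:ℝ) / ((k:ℝ) * s)) / (b/2) :=
        div_le_div_of_nonneg_left (by positivity) (half_pos hb0) hbk_lb
      have h5 : ((t:ℝ) / ((k:ℝ) * s)) / (b/2) = 2*(t:ℝ)/((k:ℝ)*s*b) := by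
        rw [div_div, show ((k:ℝ)*s*(b/2)) = ((k:ℝ)*s*b)/2 by ring, div_div_eq_mul_div,
          show ((t:ℝ)*2) = 2*(t:ℝ) by ring]
      rw [h2, h3] at h
      linarith
    have hEbound : bk ^ ((1/2 : ℝ) * ((k:ℝ) * (x - s) + (t:ℝ) + 2)) ≤ Real.exp (A3 + H * k) := by
      rw [← Real.exp_log (Real.rpow_pos_of_pos hbk_pos _), Real.exp_le_exp,
        Real.log_rpow hbk_pos]
      have h1 : ((t:ℝ)+2)/2 * Real.log bk ≤ 0 :=
        mul_nonpos_of_nonneg_of_nonpos (by positivity) hlogbk_np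
      have h2 : ((k:ℝ)*(x - s)/2) * Real.log bk
          ≤ ((k:ℝ)*(x - s)/2) * (Real.log b - 2*(t:ℝ)/((k:ℝ)*s*b)) := by
        apply mul_le_mul_of_nonpos_left lb
        have hc : ((k:ℝ)) * (x - s) ≤ 0 :=
          mul_nonpos_of_nonneg_of_nonpos hk0.le (by linarith)
        linarith
      have h3 : ((k:ℝ)*(x - s)/2) * (Real.log b - 2*(t:ℝ)/((k:ℝ)*s*b)) = H * k + A3 := by
        rw [hH, hA3]
        field_simp [ne_of_gt hb0, ne_of_gt hs0, ne_of_gt hk0]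
        ring
      have hsplit : (1/2 : ℝ) * ((k:ℝ) * (x - s) + (t:ℝ) + 2) * Real.log bk
          = ((k:ℝ)*(x - s)/2) * Real.log bk + ((t:ℝ)+2)/2 * Real.log bk := by ring
      linarith [h1, h2, h3, hsplit]
    have hE_pos : (0:ℝ) < bk ^ ((1/2 : ℝ) * ((k:ℝ) * (x - s) + (t:ℝ) + 2)) :=
      Real.rpow_pos_of_pos hbk_pos _
    have hPpos : (0:ℝ) < (k : ℝ) * ((k : ℝ) * x) ^ (-(k : ℝ) * x - 1 / 2) * ((k : ℝ) * s) ^ (-((k : ℝ) * x) / 2)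
        * Real.exp (-((k : ℝ) * x) / 2)
        * ((k : ℝ) * x + (t : ℝ)) ^ ((3 * ((k : ℝ) * x)) / 2 + (3 * (t : ℝ)) / 2 + 1 / 2) := by
      have h1 : (0:ℝ) < (k:ℝ) * x := by positivity
      have h2 : (0:ℝ) < (k:ℝ) * x + t := by positivity
      positivity
    calc ‖(k : ℝ) * ((k : ℝ) * x) ^ (-(k : ℝ) * x - 1 / 2) * ((k : ℝ) * s) ^ (-((k : ℝ) * x) / 2)
          * Real.exp (-((k : ℝ) * x) / 2)
          * ((k : ℝ) * x + (t : ℝ)) ^ ((3 * ((k : ℝ) * x)) / 2 + (3 * (t : ℝ)) / 2 + 1 / 2)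
          * bk ^ ((1/2 : ℝ) * ((k:ℝ) * (x - s) + (t:ℝ) + 2))‖
        = ((k : ℝ) * ((k : ℝ) * x) ^ (-(k : ℝ) * x - 1 / 2) * ((k : ℝ) * s) ^ (-((k : ℝ) * x) / 2)
          * Real.exp (-((k : ℝ) * x) / 2)
          * ((k : ℝ) * x + (t : ℝ)) ^ ((3 * ((k : ℝ) * x)) / 2 + (3 * (t : ℝ)) / 2 + 1 / 2))
          * bk ^ ((1/2 : ℝ) * ((k:ℝ) * (x - s) + (t:ℝ) + 2)) := by
          rw [Real.norm_eq_abs, abs_of_nonneg (mul_nonneg hPpos.le hE_pos.le)]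
      _ ≤ Real.exp (A1 + (1 + 3*(t:ℝ)/2) * Real.log k + G * k) * Real.exp (A3 + H * k) := by
          apply mul_le_mul _ hEbound hE_pos.le (Real.exp_nonneg _)
          rw [hA1, hG]
          exact fMix_P_le t s x hs0 hx0 k hk1
      _ = Real.exp ((A1 + A3) + (1 + 3*(t:ℝ)/2) * Real.log k + (G + H) * k) := by
          rw [← Real.exp_add]; congr 1; ring
  · -- case x = s; then x = 1 and s = 1
    have hx1' : x = 1 := le_antisymm hx1 (hxs ▸ hs)
    have hs1 : s = 1 := hxs ▸ hx1'
    subst hx1'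
    subst hs1
    set A1 : ℝ := -(1/2) * Real.log 1 + 3*(t:ℝ)/2 + (3*(t:ℝ)/2 + 1/2) * Real.log (1 + t) with hA1
    set A3 : ℝ := Real.log (1 + (t:ℝ)) * (((t:ℝ) + 2)/2) with hA3
    clear_value A1 A3
    have hg : ((1:ℝ)/2) * (Real.log 1 - Real.log 1) - 1/2 < 0 := by
      simp
    refine squeeze_zero_norm' ?_
      (fMix_aux_tendsto (A1 + A3) (1 + 3*(t:ℝ)/2)
        (((1:ℝ)/2) * (Real.log 1 - Real.log 1) - 1/2) hg)
    filter_upwards [tendsto_natCast_atTop_atTop.eventually_ge_atTop (1:ℝ)] with k hk1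
    have hk0 : (0:ℝ) < k := by linarith
    simp only [fMix]
    have hPpos : (0:ℝ) < (k : ℝ) * ((k : ℝ) * 1) ^ (-(k : ℝ) * 1 - 1 / 2) * ((k : ℝ) * 1) ^ (-((k : ℝ) * 1) / 2)
        * Real.exp (-((k : ℝ) * 1) / 2)
        * ((k : ℝ) * 1 + (t : ℝ)) ^ ((3 * ((k : ℝ) * 1)) / 2 + (3 * (t : ℝ)) / 2 + 1 / 2) := by
      have h1 : (0:ℝ) < (k:ℝ) * 1 := by positivity
      have h2 : (0:ℝ) < (k:ℝ) * 1 + t := by positivity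
      positivity
    have hEbound : ‖(1 - ((k:ℝ) * 1 + (t:ℝ)) / ((k:ℝ) * 1)) ^ ((1/2 : ℝ) * ((k:ℝ) * ((1:ℝ) - 1) + (t:ℝ) + 2))‖
        ≤ Real.exp A3 := by
      rw [Real.norm_eq_abs]
      have hbase : (1:ℝ) - ((k:ℝ) * 1 + (t:ℝ)) / ((k:ℝ) * 1) = -((t:ℝ)/(k:ℝ)) := by
        field_simp; ring
      have hcexp : ((1:ℝ)/2) * ((k:ℝ) * ((1:ℝ) - 1) + (t:ℝ) + 2) = ((t:ℝ) + 2)/2 := by ring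
      rw [hbase, hcexp]
      calc |(-((t:ℝ)/(k:ℝ))) ^ (((t:ℝ) + 2)/2)|
          ≤ |(-((t:ℝ)/(k:ℝ)))| ^ (((t:ℝ) + 2)/2) := Real.abs_rpow_le_abs_rpow _ _
        _ = ((t:ℝ)/(k:ℝ)) ^ (((t:ℝ) + 2)/2) := by
            rw [abs_neg, abs_of_nonneg (by positivity)]
        _ ≤ (1 + (t:ℝ)) ^ (((t:ℝ) + 2)/2) := by
            apply Real.rpow_le_rpow (by positivity) _ (by positivity)
            calc (t:ℝ)/(k:ℝ) ≤ (t:ℝ) := div_le_self (by positivity) hk1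
              _ ≤ 1 + t := by linarith
        _ = Real.exp A3 := by
            rw [hA3, Real.rpow_def_of_pos (by positivity : (0:ℝ) < 1 + (t:ℝ))]
    calc ‖(k : ℝ) * ((k : ℝ) * 1) ^ (-(k : ℝ) * 1 - 1 / 2) * ((k : ℝ) * 1) ^ (-((k : ℝ) * 1) / 2)
          * Real.exp (-((k : ℝ) * 1) / 2)
          * ((k : ℝ) * 1 + (t : ℝ)) ^ ((3 * ((k : ℝ) * 1)) / 2 + (3 * (t : ℝ)) / 2 + 1 / 2)
          * (1 - ((k:ℝ) * 1 + (t:ℝ)) / ((k:ℝ) * 1)) ^ ((1/2 : ℝ) * ((k:ℝ) * ((1:ℝ) - 1) + (t:ℝ) + 2))‖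
        = ((k : ℝ) * ((k : ℝ) * 1) ^ (-(k : ℝ) * 1 - 1 / 2) * ((k : ℝ) * 1) ^ (-((k : ℝ) * 1) / 2)
          * Real.exp (-((k : ℝ) * 1) / 2)
          * ((k : ℝ) * 1 + (t : ℝ)) ^ ((3 * ((k : ℝ) * 1)) / 2 + (3 * (t : ℝ)) / 2 + 1 / 2))
          * ‖(1 - ((k:ℝ) * 1 + (t:ℝ)) / ((k:ℝ) * 1)) ^ ((1/2 : ℝ) * ((k:ℝ) * ((1:ℝ) - 1) + (t:ℝ) + 2))‖ := by
          rw [norm_mul]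
          congr 1
          rw [Real.norm_eq_abs, abs_of_nonneg hPpos.le]
      _ ≤ Real.exp (A1 + (1 + 3*(t:ℝ)/2) * Real.log k
            + (((1:ℝ)/2) * (Real.log 1 - Real.log 1) - 1/2) * k) * Real.exp A3 := by
          apply mul_le_mul _ hEbound (norm_nonneg _) (Real.exp_nonneg _)
          rw [hA1]
          exact fMix_P_le t 1 1 one_pos one_pos k hk1
      _ = Real.exp ((A1 + A3) + (1 + 3*(t:ℝ)/2) * Real.log k
            + (((1:ℝ)/2) * (Real.log 1 - Real.log 1) - 1/2) * k) := by
          rw [← Real.exp_add]; congr 1; ring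
end

section
/- For r > 1, define δ_mix(r) = (1 − 1/r)(e·r)^{1/(r−1)} − 1 and δ_IP(r) = (r−1)/(r+1)^{(r−1)/r} − 1. Then δ_IP(r) < δ_mix(r) for all r > 1. -/
/-- The inconsistency threshold for the intrinsic priors is strictly smaller than
that for the mixture of g-priors: δ_IP(r) < δ_mix(r) for all r > 1. -/
theorem delta_IP_lt_delta_mix (r : ℝ) (hr : 1 < r) :
    (r - 1) / (r + 1) ^ ((r - 1) / r) - 1
      < (1 - 1 / r) * (Real.exp 1 * r) ^ (1 / (r - 1)) - 1 := by
  have hr0 : (0:ℝ) < r := by linarith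
  have hr1 : (0:ℝ) < r - 1 := by linarith
  have he : (0:ℝ) < (r - 1) / r := by positivity
  have hlog : 0 < Real.log r := Real.log_pos hr
  have hrp : (0:ℝ) < r ^ ((r-1)/r) := Real.rpow_pos_of_pos hr0 _
  have h1 : (r - 1) / (r + 1) ^ ((r - 1) / r) < (r - 1) / r ^ ((r - 1) / r) := by
    apply div_lt_div_of_pos_left hr1 hrp
    exact Real.rpow_lt_rpow (le_of_lt hr0) (by linarith) he
  have hsplit : r ^ (1/r) * r ^ ((r-1)/r) = r := by
    rw [← Real.rpow_add hr0]
    rw [show 1/r + (r-1)/r = 1 by field_simp; ring]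
    exact Real.rpow_one r
  have h2 : (r - 1) / r ^ ((r-1)/r) = (1 - 1/r) * r ^ (1/r) := by
    rw [div_eq_iff (ne_of_gt hrp), mul_assoc, hsplit]
    field_simp
  have h4 : r ^ (1/r) < (Real.exp 1 * r) ^ (1/(r-1)) := by
    have her : (0:ℝ) < Real.exp 1 * r := by positivity
    rw [← Real.exp_log (Real.rpow_pos_of_pos hr0 (1/r)),
        ← Real.exp_log (Real.rpow_pos_of_pos her (1/(r-1)))]
    apply Real.exp_lt_exp.mpr
    rw [Real.log_rpow hr0, Real.log_rpow her,
        Real.log_mul (by positivity) (by positivity), Real.log_exp]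
    rw [div_mul_eq_mul_div, div_mul_eq_mul_div, div_lt_div_iff₀ hr0 hr1]
    nlinarith
  have h5 : (1 - 1/r) * r ^ (1/r) < (1 - 1/r) * (Real.exp 1 * r) ^ (1/(r-1)) := by
    apply mul_lt_mul_of_pos_left h4
    have : 1/r < 1 := by rw [div_lt_one hr0]; linarith
    linarith
  linarith [h1, h2.le, h2.ge, h5]
end
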